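/- The two iterated integrals (1/2)·∫₀^{1/2} (s·(1−s))⁴ · ( ∫₀^{s} (u·(1−u))² du ) ds and (1/2)·∫_{1/2}^{1} (s·(1−s))⁴ · ( ∫_{1/2}^{s} (u·(1−u))² du ) ds are not equal. -/

import Mathlib

open intervalIntegral

lemma inner_int (s : ℝ) :
    ∫ u in (0:ℝ)..s, (u * (1 - u)) ^ 2 = s^3/3 - s^4/2 + s^5/5 := by
  rw [intervalIntegral.integral_eq_sub_of_hasDerivAt
    (f := fun x : ℝ => x^3/3 - x^4/2 + x^5/5)
    (f' := fun u : ℝ => (u * (1 - u)) ^ 2)]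
  · ring
  · intro x _
    have h := (((hasDerivAt_pow 3 x).div_const 3).sub
      ((hasDerivAt_pow 4 x).div_const 2)).add ((hasDerivAt_pow 5 x).div_const 5)
    convert h using 1
    · rfl
    push_cast
    ring
  · exact (Continuous.intervalIntegrable (by continuity) _ _)

lemma out1 :
    ∫ s in (0:ℝ)..(1/2), (s * (1 - s)) ^ 4 * (s^3/3 - s^4/2 + s^5/5)
      = 1199 / 154828800 := by
  rw [intervalIntegral.integral_eq_sub_of_hasDerivAt
    (f := fun x : ℝ => x^8/24 - 11*x^9/54 + 21*x^10/50 - 7*x^11/15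
      + 53*x^12/180 - x^13/10 + x^14/70)
    (f' := fun s : ℝ => (s * (1 - s)) ^ 4 * (s^3/3 - s^4/2 + s^5/5))]
  · norm_num
  · intro x _
    have h := (((((((hasDerivAt_pow 8 x).div_const 24).sub
      (((hasDerivAt_pow 9 x).const_mul (11:ℝ)).div_const 54)).add
      (((hasDerivAt_pow 10 x).const_mul (21:ℝ)).div_const 50)).sub
      (((hasDerivAt_pow 11 x).const_mul (7:ℝ)).div_const 15)).add
      (((hasDerivAt_pow 12 x).const_mul (53:ℝ)).div_const 180)).sub
      ((hasDerivAt_pow 13 x).div_const 10)).add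
      ((hasDerivAt_pow 14 x).div_const 70)
    convert h using 1
    · rfl
    push_cast
    ring
  · exact (Continuous.intervalIntegrable (by continuity) _ _)

lemma out2 :
    ∫ s in (1/2:ℝ)..1, (s * (1 - s)) ^ 4 * (s^3/3 - s^4/2 + s^5/5 - 1/60)
      = 283 / 51609600 := by
  rw [intervalIntegral.integral_eq_sub_of_hasDerivAt
    (f := fun x : ℝ => -(x^5/300) + x^6/90 - x^7/70 + x^8/20 - 37*x^9/180
      + 21*x^10/50 - 7*x^11/15 + 53*x^12/180 - x^13/10 + x^14/70)
    (f' := fun s : ℝ => (s * (1 - s)) ^ 4 * (s^3/3 - s^4/2 + s^5/5 - 1/60))]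
  · norm_num
  · intro x _
    have h := ((((((((((hasDerivAt_pow 5 x).div_const 300).neg).add
      ((hasDerivAt_pow 6 x).div_const 90)).sub
      ((hasDerivAt_pow 7 x).div_const 70)).add
      ((hasDerivAt_pow 8 x).div_const 20)).sub
      (((hasDerivAt_pow 9 x).const_mul (37:ℝ)).div_const 180)).add
      (((hasDerivAt_pow 10 x).const_mul (21:ℝ)).div_const 50)).sub
      (((hasDerivAt_pow 11 x).const_mul (7:ℝ)).div_const 15)).add
      (((hasDerivAt_pow 12 x).const_mul (53:ℝ)).div_const 180)).sub
      ((hasDerivAt_pow 13 x).div_const 10) |>.add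
      ((hasDerivAt_pow 14 x).div_const 70)
    convert h using 1
    · rfl
    push_cast
    ring
  · exact (Continuous.intervalIntegrable (by continuity) _ _)

theorem stmt_17 :
    (1 / 2 : ℝ) *
        (∫ s in (0:ℝ)..(1/2), (s * (1 - s)) ^ 4 * ∫ u in (0:ℝ)..s, (u * (1 - u)) ^ 2) ≠
      (1 / 2 : ℝ) *
        (∫ s in (1/2:ℝ)..1, (s * (1 - s)) ^ 4 * ∫ u in (1/2:ℝ)..s, (u * (1 - u)) ^ 2) := by
  have h1 : (∫ s in (0:ℝ)..(1/2), (s * (1 - s)) ^ 4 * ∫ u in (0:ℝ)..s, (u * (1 - u)) ^ 2)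
      = 1199 / 154828800 := by
    rw [← out1]
    apply intervalIntegral.integral_congr
    intro s _
    simp only [inner_int]
  have h2 : (∫ s in (1/2:ℝ)..1, (s * (1 - s)) ^ 4 * ∫ u in (1/2:ℝ)..s, (u * (1 - u)) ^ 2)
      = 283 / 51609600 := by
    rw [← out2]
    apply intervalIntegral.integral_congr
    intro s _
    have hadj := intervalIntegral.integral_add_adjacent_intervals
      (a := (0:ℝ)) (b := (1/2:ℝ)) (c := s) (f := fun u : ℝ => (u * (1 - u)) ^ 2) (μ := MeasureTheory.volume)
      (Continuous.intervalIntegrable (by continuity) _ _)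
      (Continuous.intervalIntegrable (by continuity) _ _)
    have hsplit : ∫ u in (1/2:ℝ)..s, (u * (1 - u)) ^ 2
        = (∫ u in (0:ℝ)..s, (u * (1 - u)) ^ 2) - ∫ u in (0:ℝ)..(1/2), (u * (1 - u)) ^ 2 :=
      eq_sub_of_add_eq' hadj
    simp only [hsplit, inner_int]
    norm_num
  rw [h1, h2]
  norm_num
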